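/- Let p > 2 be a prime, r, m, n ≥ 1, F = GF(p^r), and V = M_{m,n}(F). Suppose either (i) s is even and ρ is an odd permutation, or (ii) s is odd and at least one of π, λ is an odd permutation. Then for every choice of subkeys k_1, …, k_{s+1} ∈ V, the s-round generalized Rijndael-like function T_s = σ[k_{s+1}] ∘ π ∘ λ ∘ (σ[k_s] ∘ ρ ∘ π ∘ λ) ∘ ⋯ ∘ (σ[k_2] ∘ ρ ∘ π ∘ λ) ∘ σ[k_1] is an odd permutation of V. -/

import Mathlib

open Equiv

private lemma units_pow_even (u : ℤˣ) {t : ℕ} (h : Even t) : u ^ t = 1 := by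
  obtain ⟨a, rfl⟩ := h
  rcases Int.units_eq_one_or u with rfl | rfl <;> simp [pow_add]

private lemma units_pow_odd (u : ℤˣ) {t : ℕ} (h : Odd t) : u ^ t = u := by
  obtain ⟨a, rfl⟩ := h
  rcases Int.units_eq_one_or u with rfl | rfl <;> simp [pow_add, pow_mul]

private lemma units_eq_one_of_odd_pow {u : ℤˣ} {t : ℕ} (h : Odd t) (hu : u ^ t = 1) :
    u = 1 := by rw [units_pow_odd u h] at hu; exact hu

/-- apply `σ` at every coordinate satisfying `P`. -/
def permOn {ι F : Type*} (P : ι → Prop) [DecidablePred P] (σ : Equiv.Perm F) :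
    Equiv.Perm (ι → F) where
  toFun g x := if P x then σ (g x) else g x
  invFun g x := if P x then σ.symm (g x) else g x
  left_inv g := by funext x; by_cases h : P x <;> simp [h]
  right_inv g := by funext x; by_cases h : P x <;> simp [h]

lemma permOn_apply {ι F : Type*} (P : ι → Prop) [DecidablePred P] (σ : Equiv.Perm F)
    (g : ι → F) (x : ι) : permOn P σ g x = if P x then σ (g x) else g x := rfl

lemma permOn_congr {ι F : Type*} (P Q : ι → Prop) [DecidablePred P] [DecidablePred Q]
    (h : ∀ x, P x ↔ Q x) (σ : Equiv.Perm F) : permOn P σ = permOn Q σ := by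
  apply Equiv.ext; intro g; funext x
  simp only [permOn_apply]
  by_cases hx : P x
  · rw [if_pos hx, if_pos ((h x).1 hx)]
  · rw [if_neg hx, if_neg (fun hq => hx ((h x).2 hq))]

lemma permOn_mul_compl {ι F : Type*} (P : ι → Prop) [DecidablePred P] (σ : Equiv.Perm F) :
    permOn P σ * permOn (fun x => ¬ P x) σ = permOn (fun _ => True) σ := by
  apply Equiv.ext; intro g; funext x
  simp only [Equiv.Perm.mul_apply, permOn_apply]
  by_cases hx : P x <;> simp [hx]

lemma permOn_conj {ι F : Type*} (P : ι → Prop) [DecidablePred P] (σ : Equiv.Perm F)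
    (e : ι ≃ ι) :
    permOn (fun x => P (e.symm x)) σ =
      (Equiv.arrowCongr e (Equiv.refl F)).permCongr (permOn P σ) := by
  apply Equiv.ext; intro g; funext x
  simp [permOn_apply, Equiv.permCongr_apply, Equiv.arrowCongr, Equiv.Perm.inv_def]

lemma sign_permOn_compl {ι F : Type*} [Fintype ι] [DecidableEq ι] [Fintype F]
    [DecidableEq F] (P : ι → Prop) [DecidablePred P] (σ : Equiv.Perm F) (e : ι ≃ ι)
    (he : ∀ x, P (e.symm x) ↔ ¬ P x) :
    Equiv.Perm.sign (permOn (fun x => ¬ P x) σ) = Equiv.Perm.sign (permOn P σ) := by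
  rw [← permOn_congr _ _ he, permOn_conj P σ e, Equiv.Perm.sign_permCongr]

lemma sign_permOn_univ {ι F : Type*} [Fintype ι] [DecidableEq ι] [Fintype F]
    [DecidableEq F] (P : ι → Prop) [DecidablePred P] (σ : Equiv.Perm F) (e : ι ≃ ι)
    (he : ∀ x, P (e.symm x) ↔ ¬ P x) :
    Equiv.Perm.sign (permOn (fun _ : ι => True) σ) = 1 := by
  rw [← permOn_mul_compl P σ, map_mul, sign_permOn_compl P σ e he]
  exact Int.units_mul_self _

open Fin.NatCast in
lemma sign_permOn_univ_of_even {m n : ℕ} (hn : n ≠ 0) (hn2 : Even n)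
    {F : Type*} [Fintype F] [DecidableEq F] (σ : Equiv.Perm F) :
    Equiv.Perm.sign (permOn (fun _ : Fin m × Fin n => True) σ) = 1 := by
  obtain ⟨h, rfl⟩ := hn2
  haveI : NeZero (h + h) := ⟨hn⟩
  have hh : h ≠ 0 := by omega
  have hval : ((h : Fin (h + h)) : ℕ) = h := by
    rw [Fin.val_natCast, Nat.mod_eq_of_lt (by omega)]
  refine sign_permOn_univ (fun x : Fin m × Fin (h + h) => (x.2 : ℕ) < h) σ
    (Equiv.prodCongr (Equiv.refl _) (Equiv.addRight ((h : Fin (h + h))))) ?_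
  intro x
  have hx2 := x.2.isLt
  have hsub : (((Equiv.addRight ((h : Fin (h + h)))).symm x.2 : Fin (h + h)) : ℕ) =
      ((x.2 : ℕ) + h) % (h + h) := by
    rw [Equiv.addRight_symm]
    show ((x.2 + -(h : Fin (h + h)) : Fin (h + h)) : ℕ) = _
    rw [← sub_eq_add_neg, Fin.sub_def]
    simp only [hval]
    congr 1
    omega
  simp only [Equiv.prodCongr_symm, Equiv.prodCongr_apply, Equiv.refl_symm,
    Equiv.refl_apply, Prod.map]
  rw [hsub]
  constructor
  · intro hlt hc
    rw [Nat.mod_eq_of_lt (by omega)] at hlt; omega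
  · intro hc
    rw [Nat.mod_eq_sub_mod (by omega), Nat.mod_eq_of_lt (by omega)]; omega

/-- The `s`-round function
`T_s = σ[k_{s+1}] ∘ π ∘ λ ∘ (σ[k_s] ∘ ρ ∘ π ∘ λ) ∘ ⋯ ∘ (σ[k_2] ∘ ρ ∘ π ∘ λ) ∘ σ[k_1]`,
as a permutation (permutation multiplication is function composition). -/
def sRound {V : Type*} [AddGroup V] (rho piP lam : Equiv.Perm V)
    (s : ℕ) (k : ℕ → V) : Equiv.Perm V :=
  Equiv.addRight (k (s + 1)) * piP * lam *
    (List.ofFn fun i : Fin (s - 1) =>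
      Equiv.addRight (k (s - i.val)) * rho * piP * lam).prod *
    Equiv.addRight (k 1)

/-- For `p > 2`, if either (`s` is even and `ρ` is odd) or (`s` is odd and `π` or `λ` is
odd), then every `s`-round generalized Rijndael-like function on `M_{m,n}(GF(p^r))` is an
odd permutation. -/
theorem stmt_12 (p r m n : ℕ) (hp : p.Prime) (hp2 : 2 < p)
    (hr : 1 ≤ r) (hm : 1 ≤ m) (hn : 1 ≤ n)
    (F : Type*) [Field F] [Fintype F] [DecidableEq F] (hF : Fintype.card F = p ^ r)
    (A B : F) (hA : A ≠ 0) (c : Fin m → Fin n)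
    (C : Matrix (Fin m) (Fin m) F) (hC : IsUnit C)
    (lam piP rho : Equiv.Perm (Matrix (Fin m) (Fin n) F))
    (hlam : ∀ (a : Matrix (Fin m) (Fin n) F) (i : Fin m) (j : Fin n),
      lam a i j = A * (a i j)⁻¹ + B)
    (hpi : ∀ (a : Matrix (Fin m) (Fin n) F) (i : Fin m) (j : Fin n),
      piP a i j = a i (j - c i))
    (hrho : ∀ a : Matrix (Fin m) (Fin n) F, rho a = C * a)
    (s : ℕ) (hs : 1 < s)
    (hcond : (Even s ∧ Equiv.Perm.sign rho = -1) ∨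
      (Odd s ∧ (Equiv.Perm.sign piP = -1 ∨ Equiv.Perm.sign lam = -1)))
    (k : ℕ → Matrix (Fin m) (Fin n) F) :
    Equiv.Perm.sign (sRound rho piP lam s k) = -1 := by

  haveI : NeZero n := ⟨by omega⟩
  -- AddRoundKey is always even
  have hadd : ∀ kk : Matrix (Fin m) (Fin n) F,
      Equiv.Perm.sign (Equiv.addRight kk) = 1 := by
    intro kk
    have hodd : Odd (Fintype.card (Matrix (Fin m) (Fin n) F)) := by
      have hcc : Fintype.card (Matrix (Fin m) (Fin n) F) = (Fintype.card F ^ n) ^ m := by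
        rw [Fintype.card_eq_nat_card]; simp [Matrix, Fintype.card_fun]
      rw [hcc, hF]
      exact (((hp.odd_of_ne_two (by omega)).pow).pow).pow
    have h1 : (Equiv.addRight kk) ^ (Fintype.card (Matrix (Fin m) (Fin n) F)) = 1 := by
      rw [show (Equiv.addRight kk) ^ (Fintype.card (Matrix (Fin m) (Fin n) F)) =
          Equiv.addRight ((Fintype.card (Matrix (Fin m) (Fin n) F)) • kk) by ext x; simp,
        card_nsmul_eq_zero, Equiv.addRight_zero]
    exact units_eq_one_of_odd_pow hodd (by rw [← map_pow, h1, map_one])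
  -- π is even if n is odd
  have hpi_odd : Odd n → Equiv.Perm.sign piP = 1 := by
    intro hnodd
    have hpow : ∀ (t : ℕ) (a : Matrix (Fin m) (Fin n) F) (i : Fin m) (j : Fin n),
        (piP ^ t) a i j = a i (j - t • c i) := by
      intro t
      induction t with
      | zero => intro a i j; simp
      | succ t ih =>
        intro a i j
        rw [pow_succ, Equiv.Perm.mul_apply, ih (piP a) i j, hpi, sub_sub, ← succ_nsmul]
    have hpown : piP ^ n = 1 := by
      refine Equiv.ext fun a => Matrix.ext fun i j => ?_
      have h0 : (n • c i : Fin n) = 0 := by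
        simpa using card_nsmul_eq_zero (x := c i)
      rw [hpow n a i j, h0, sub_zero]; rfl
    exact units_eq_one_of_odd_pow hnodd (by rw [← map_pow, hpown, map_one])
  -- λ is even if n is even
  have hlam_even : Even n → Equiv.Perm.sign lam = 1 := by
    intro hne
    set sbox : Equiv.Perm F := ((Function.Involutive.toPerm _ inv_involutive).trans
        (Equiv.mulLeft₀ A hA)).trans (Equiv.addRight B) with hsbox
    have hsb : ∀ x : F, sbox x = A * x⁻¹ + B := fun x => rfl
    set e0 : Matrix (Fin m) (Fin n) F ≃ ((Fin m × Fin n) → F) :=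
      (Equiv.curry (Fin m) (Fin n) F).symm with he0
    have hconj : e0.permCongr lam = permOn (fun _ : Fin m × Fin n => True) sbox := by
      apply Equiv.ext; intro g; funext x
      rcases x with ⟨i, j⟩
      show (lam (e0.symm g)) i j = _
      rw [permOn_apply, if_pos trivial, hlam, hsb]
      rfl
    rw [← Equiv.Perm.sign_permCongr e0 lam, hconj]
    exact sign_permOn_univ_of_even (by omega) hne sbox
  -- sign of the full round function
  have hsign : Equiv.Perm.sign (sRound rho piP lam s k) =
      Equiv.Perm.sign piP * Equiv.Perm.sign lam *
        (Equiv.Perm.sign rho * Equiv.Perm.sign piP * Equiv.Perm.sign lam) ^ (s - 1) := by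
    unfold sRound
    rw [map_mul, map_mul, map_mul, map_mul, hadd, hadd, one_mul, mul_one]
    congr 1
    rw [MonoidHom.map_list_prod, List.map_ofFn]
    have hfn : (⇑Equiv.Perm.sign ∘ fun i : Fin (s - 1) =>
        Equiv.addRight (k (s - i.val)) * rho * piP * lam)
        = fun _ : Fin (s - 1) =>
          Equiv.Perm.sign rho * Equiv.Perm.sign piP * Equiv.Perm.sign lam := by
      funext i
      simp [map_mul, hadd]
    rw [hfn, List.ofFn_const, List.prod_replicate]
  rw [hsign]
  rcases hcond with ⟨hse, hrho1⟩ | ⟨hso, hor⟩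
  · have hs1 : Odd (s - 1) := Nat.Even.sub_odd (by omega) hse odd_one
    rw [mul_pow, mul_pow, units_pow_odd _ hs1, units_pow_odd _ hs1, units_pow_odd _ hs1,
      hrho1]
    rcases Int.units_eq_one_or (Equiv.Perm.sign piP) with h1 | h1 <;>
      rcases Int.units_eq_one_or (Equiv.Perm.sign lam) with h2 | h2 <;>
      rw [h1, h2] <;> decide
  · have hs1 : Even (s - 1) := Nat.Odd.sub_odd hso odd_one
    rw [units_pow_even _ hs1, mul_one]
    rcases Nat.even_or_odd n with hne | hno
    · have hl1 := hlam_even hne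
      rcases hor with h | h
      · rw [h, hl1]; decide
      · rw [hl1] at h; exact absurd h (by decide)
    · have hp1 := hpi_odd hno
      rcases hor with h | h
      · rw [hp1] at h; exact absurd h (by decide)
      · rw [h, hp1]; decide
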